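/- Combining Lemma 1 with the majority-vote probability bound: if T ≥ 3 is odd, the base classifiers are independent and each correct with probability ρ ≥ 1/2, and the reasonableness conditions hold for all examples, then the expected cost of the majority-vote ensemble on any finite example set S is at most the average expected cost of a single base classifier on S. -/

import Mathlib

open Finset

variable {ι : Type*} [DecidableEq ι]

/-- The majority-vote correctness probability of T classifiers each correct with probability ρ. -/
noncomputable def Pc (T : ℕ) (ρ : ℝ) : ℝ :=
  ∑ j ∈ Finset.Ioc (T / 2) T, (T.choose j : ℝ) * ρ ^ j * (1 - ρ) ^ (T - j)

/-- Expected total cost on S of a classifier correct with probability q. -/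
noncomputable def ECost (S : Finset ι) (y : ι → Bool)
    (CTP CFP CFN CTN : ι → ℝ) (q : ℝ) : ℝ :=
  ∑ i ∈ S.filter (fun i => y i = true), (q * CTP i + (1 - q) * CFN i) +
  ∑ i ∈ S.filter (fun i => y i = false), (q * CTN i + (1 - q) * CFP i)

/-- Condorcet: majority vote of 2m+1 voters each correct w.p. ρ ≥ 1/2 is correct w.p. ≥ ρ. -/
lemma pc_ge_aux (m : ℕ) (ρ : ℝ) (hρ : 1 / 2 ≤ ρ) (hρ1 : ρ ≤ 1) :
    ρ ≤ Pc (2 * m + 1) ρ := by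
  have h0 : (0:ℝ) ≤ 1 - ρ := by linarith
  have h1 : 1 - ρ ≤ ρ := by linarith
  have hρ0 : (0:ℝ) ≤ ρ := by linarith
  set n := 2 * m with hn
  set b : ℕ → ℝ := fun j => ((n.choose j : ℝ)) * ρ ^ j * (1 - ρ) ^ (n - j) with hb
  -- split the majority-vote sum
  have hsplit : Pc (n + 1) ρ = ρ * (∑ i ∈ range (m + 1), b (m + i)) +
      ∑ i ∈ range m, (1 - ρ) * b (m + 1 + i) := by
    have hdiv : (n + 1) / 2 = m := by omega
    have hIoc : Ioc ((n + 1) / 2) (n + 1) = Ico (m + 1) (n + 2) := by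
      ext x; simp only [mem_Ioc, mem_Ico]; omega
    rw [Pc, hIoc, Finset.sum_Ico_eq_sum_range]
    have hcard : n + 2 - (m + 1) = m + 1 := by omega
    rw [hcard]
    have hterm : ∀ i ∈ range (m + 1),
        ((n + 1).choose (m + 1 + i) : ℝ) * ρ ^ (m + 1 + i) * (1 - ρ) ^ (n + 1 - (m + 1 + i))
          = ρ * b (m + i) +
            ((n.choose (m + 1 + i) : ℝ)) * ρ ^ (m + 1 + i) * (1 - ρ) ^ (m - i) := by
      intro i hi
      rw [mem_range] at hi
      have e1 : n + 1 - (m + 1 + i) = m - i := by omega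
      have e2 : n - (m + i) = m - i := by omega
      have e3 : m + 1 + i = (m + i) + 1 := by omega
      rw [e1, hb]
      simp only [e2, e3, Nat.choose_succ_succ]
      push_cast
      ring
    rw [Finset.sum_congr rfl hterm, Finset.sum_add_distrib]
    congr 1
    · rw [Finset.mul_sum]
    · rw [Finset.sum_range_succ]
      have hz : ((n.choose (m + 1 + m) : ℝ)) * ρ ^ (m + 1 + m) * (1 - ρ) ^ (m - m) = 0 := by
        have h5 : n.choose (m + 1 + m) = 0 := Nat.choose_eq_zero_of_lt (by omega)
        rw [h5]; push_cast; ring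
      rw [hz, add_zero]
      apply Finset.sum_congr rfl
      intro i hi
      rw [mem_range] at hi
      have e4 : n - (m + 1 + i) = m - 1 - i := by omega
      have e5 : m - i = (m - 1 - i) + 1 := by omega
      rw [hb]
      simp only [e4, e5, pow_succ]
      ring
  -- express ρ via the binomial theorem
  have hone : ρ = ρ * (∑ j ∈ range m, b j) + ρ * (∑ i ∈ range (m + 1), b (m + i)) := by
    have hbin : (1:ℝ) = ∑ j ∈ range (n + 1), b j := by
      have h6 := add_pow ρ (1 - ρ) n
      simp only [add_sub_cancel, one_pow] at h6
      rw [h6]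
      apply Finset.sum_congr rfl
      intro j _
      simp only [hb]
      ring
    have hsplit2 : ∑ j ∈ range (n + 1), b j
        = ∑ j ∈ range m, b j + ∑ i ∈ range (m + 1), b (m + i) := by
      rw [Finset.range_eq_Ico, ← Finset.sum_Ico_consecutive _ (Nat.zero_le m) (by omega : m ≤ n + 1),
        Finset.sum_Ico_eq_sum_range, Finset.sum_Ico_eq_sum_range]
      have h7 : n + 1 - m = m + 1 := by omega
      rw [h7]
      simp only [Nat.sub_zero, Nat.zero_add, zero_add]
    calc ρ = ρ * 1 := by ring
    _ = ρ * (∑ j ∈ range m, b j + ∑ i ∈ range (m + 1), b (m + i)) := by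
        rw [← hsplit2, ← hbin]
    _ = _ := by ring
  -- pairwise comparison
  have hk : ∀ k, k < m → ρ * b k ≤ (1 - ρ) * b (n - k) := by
    intro k hkm
    have c1 : n - (n - k) = k := by omega
    have c2 : n.choose (n - k) = n.choose k := Nat.choose_symm (by omega)
    set d := n - 2 * k - 1 with hd
    have e : n - k = (k + 1) + d := by omega
    simp only [hb]
    rw [c1, c2, e]
    have hpd : (1 - ρ) ^ d ≤ ρ ^ d := pow_le_pow_left₀ h0 h1 d
    have hC : (0:ℝ) ≤ (n.choose k : ℝ) * ρ ^ (k + 1) * (1 - ρ) ^ (k + 1) := by positivity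
    calc ρ * ((n.choose k : ℝ) * ρ ^ k * (1 - ρ) ^ ((k + 1) + d))
        = (n.choose k : ℝ) * ρ ^ (k + 1) * (1 - ρ) ^ (k + 1) * (1 - ρ) ^ d := by
          ring
      _ ≤ (n.choose k : ℝ) * ρ ^ (k + 1) * (1 - ρ) ^ (k + 1) * ρ ^ d :=
          mul_le_mul_of_nonneg_left hpd hC
      _ = (1 - ρ) * ((n.choose k : ℝ) * ρ ^ ((k + 1) + d) * (1 - ρ) ^ k) := by
          ring
  have key : ∀ i ∈ range m, ρ * b (m - 1 - i) ≤ (1 - ρ) * b (m + 1 + i) := by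
    intro i hi
    rw [mem_range] at hi
    have h := hk (m - 1 - i) (by omega)
    have : n - (m - 1 - i) = m + 1 + i := by omega
    rwa [this] at h
  have hrefl : ∑ j ∈ range m, b j = ∑ i ∈ range m, b (m - 1 - i) :=
    (Finset.sum_range_reflect (fun j => b j) m).symm
  have hmain : ρ * ∑ j ∈ range m, b j ≤ ∑ i ∈ range m, (1 - ρ) * b (m + 1 + i) := by
    rw [hrefl, Finset.mul_sum]
    exact Finset.sum_le_sum key
  rw [hsplit]
  linarith [hone, hmain]

/-- For odd T ≥ 3 independent base classifiers each correct with probability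
ρ ≥ 1/2 (ρ ≤ 1), under the reasonableness conditions the expected cost of the majority-vote
ensemble on any finite example set S is at most the average expected cost of a base classifier. -/
theorem ensemble_majority_cost (T : ℕ) (hT : 3 ≤ T) (hodd : Odd T)
    (ρ : ℝ) (hρ : 1 / 2 ≤ ρ) (hρ1 : ρ ≤ 1)
    (S : Finset ι) (y : ι → Bool) (CTP CFP CFN CTN : ι → ℝ)
    (hreason : ∀ i ∈ S, CTN i < CFP i ∧ CTP i < CFN i) :
    ECost S y CTP CFP CFN CTN (Pc T ρ) ≤ ECost S y CTP CFP CFN CTN ρ := by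
  obtain ⟨m, rfl⟩ := hodd
  have hpc : ρ ≤ Pc (2 * m + 1) ρ := pc_ge_aux m ρ hρ hρ1
  rw [ECost, ECost]
  apply add_le_add
  · apply Finset.sum_le_sum
    intro i hi
    rw [mem_filter] at hi
    have h := (hreason i hi.1).2
    nlinarith [hpc, h]
  · apply Finset.sum_le_sum
    intro i hi
    rw [mem_filter] at hi
    have h := (hreason i hi.1).1
    nlinarith [hpc, h]
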